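/- Let p ≪ q in Minkowski space ℝ^{1,1} with p = (-1,0), q = (1,0), and define λ(t,x) = (1/2)·log( ((1+t)² - x²) / ((1-t)² - x²) ) on the diamond O = {(t,x) : |t| + |x| < 1}. If (t₁,x₁), (t₂,x₂) ∈ O with t₂ - t₁ ≥ |x₂ - x₁| and (t₁,x₁) ≠ (t₂,x₂), then λ(t₁,x₁) < λ(t₂,x₂). -/
import Mathlib


/-- The intrinsic time function on the standard diamond in `ℝ^{1,1}`. -/
noncomputable def diamondTime (t x : ℝ) : ℝ :=
  (1 / 2) * Real.log (((1 + t) ^ 2 - x ^ 2) / ((1 - t) ^ 2 - x ^ 2))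

private noncomputable def gfun (u : ℝ) : ℝ := Real.log ((1 + u) / (1 - u))

private lemma gfun_lt {a b : ℝ} (ha : |a| < 1) (hb : |b| < 1) (hab : a < b) :
    gfun a < gfun b := by
  rw [abs_lt] at ha hb
  apply Real.log_lt_log (div_pos (by linarith) (by linarith))
  rw [div_lt_div_iff₀ (by linarith) (by linarith)]
  nlinarith

private lemma gfun_le {a b : ℝ} (ha : |a| < 1) (hb : |b| < 1) (hab : a ≤ b) :
    gfun a ≤ gfun b := by
  rcases eq_or_lt_of_le hab with rfl | h
  · exact le_refl _
  · exact (gfun_lt ha hb h).le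

private lemma diamondTime_eq (t x : ℝ) (h : |t| + |x| < 1) :
    diamondTime t x = (1 / 2) * (gfun (t + x) + gfun (t - x)) := by
  have h1 : |t + x| < 1 := lt_of_le_of_lt (abs_add_le t x) h
  have h2 : |t - x| < 1 := lt_of_le_of_lt (abs_sub t x) h
  rw [abs_lt] at h1 h2
  unfold diamondTime gfun
  rw [show ((1 + t) ^ 2 - x ^ 2) / ((1 - t) ^ 2 - x ^ 2)
      = ((1 + (t + x)) / (1 - (t + x))) * ((1 + (t - x)) / (1 - (t - x))) by
    field_simp; ring]
  rw [Real.log_mul (ne_of_gt (div_pos (by linarith) (by linarith))) (ne_of_gt (div_pos (by linarith) (by linarith)))]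

/-- the time function `λ(t,x) = ½ log(((1+t)²-x²)/((1-t)²-x²))`
is strictly increasing along causal relations in the standard diamond
`O = {(t,x) : |t|+|x| < 1}`. -/
theorem stmt_13 (t₁ x₁ t₂ x₂ : ℝ)
    (h₁ : |t₁| + |x₁| < 1) (h₂ : |t₂| + |x₂| < 1)
    (hcausal : |x₂ - x₁| ≤ t₂ - t₁) (hne : (t₁, x₁) ≠ (t₂, x₂)) :
    diamondTime t₁ x₁ < diamondTime t₂ x₂ := by
  have hu1 : |t₁ + x₁| < 1 := lt_of_le_of_lt (abs_add_le _ _) h₁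
  have hv1 : |t₁ - x₁| < 1 := lt_of_le_of_lt (abs_sub _ _) h₁
  have hu2 : |t₂ + x₂| < 1 := lt_of_le_of_lt (abs_add_le _ _) h₂
  have hv2 : |t₂ - x₂| < 1 := lt_of_le_of_lt (abs_sub _ _) h₂
  rw [abs_le] at hcausal
  have hu : t₁ + x₁ ≤ t₂ + x₂ := by linarith [hcausal.1]
  have hv : t₁ - x₁ ≤ t₂ - x₂ := by linarith [hcausal.2]
  have hstrict : t₁ + x₁ < t₂ + x₂ ∨ t₁ - x₁ < t₂ - x₂ := by
    by_contra hcon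
    push_neg at hcon
    have e1 : t₁ + x₁ = t₂ + x₂ := le_antisymm hu hcon.1
    have e2 : t₁ - x₁ = t₂ - x₂ := le_antisymm hv hcon.2
    exact hne (by rw [Prod.mk.injEq]; constructor <;> linarith)
  rw [diamondTime_eq _ _ h₁, diamondTime_eq _ _ h₂]
  rcases hstrict with h | h
  · have := gfun_lt hu1 hu2 h
    have := gfun_le hv1 hv2 hv
    linarith
  · have := gfun_lt hv1 hv2 h
    have := gfun_le hu1 hu2 hu
    linarith
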